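/- Let a > 0, b < 0, p > 1, δ < 0 be real numbers, and let u : ℝ → (0, ∞) be a differentiable function satisfying u'(t) ≥ δ(a·u(t) + b·u(t)^p) for all t ∈ ℝ. Then u(t) ≤ (−a/b)^{1/(p−1)} for all t ∈ ℝ. -/

import Mathlib

open Real

theorem stmt_6 (a b p δ : ℝ) (ha : 0 < a) (hb : b < 0) (hp : 1 < p) (hδ : δ < 0)
    (u u' : ℝ → ℝ) (hpos : ∀ t : ℝ, 0 < u t)
    (hderiv : ∀ t : ℝ, HasDerivAt u (u' t) t)
    (hineq : ∀ t : ℝ, u' t ≥ δ * (a * u t + b * u t ^ p)) :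
    ∀ t : ℝ, u t ≤ (-a / b) ^ (1 / (p - 1)) := by
  intro t₀
  by_contra hcon
  push_neg at hcon
  set c : ℝ := (1 - p) * δ with hc
  have hc0 : 0 < c := mul_pos_of_neg_of_neg (by linarith) hδ
  have hac : 0 < a * c := mul_pos ha hc0
  set w : ℝ → ℝ := fun t => u t ^ (1 - p) with hwdef
  have hw : ∀ t, HasDerivAt w ((1 - p) * u t ^ (1 - p - 1) * u' t) t := by
    intro t
    have h := (hderiv t).rpow_const (p := 1 - p) (Or.inl (hpos t).ne')
    convert h using 1
    ring
  have hwpos : ∀ t, 0 < w t := fun t => rpow_pos_of_pos (hpos t) _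
  -- key differential inequality for w
  have hkey : ∀ t, (1 - p) * u t ^ (1 - p - 1) * u' t ≤ c * (a * w t + b) := by
    intro t
    have hu := hpos t
    have h1 : u t ^ (1 - p - 1) * u t = u t ^ (1 - p) := by
      conv_rhs => rw [show (1 - p : ℝ) = (1 - p - 1) + 1 by ring]
      rw [Real.rpow_add hu, Real.rpow_one]
    have h2 : u t ^ (1 - p - 1) * u t ^ p = 1 := by
      rw [← Real.rpow_add hu]
      norm_num
    have hm : (1 - p) * u t ^ (1 - p - 1) ≤ 0 := by
      have := Real.rpow_pos_of_pos hu (1 - p - 1)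
      nlinarith
    have hmul := mul_le_mul_of_nonpos_left (hineq t) hm
    have hexp : (1 - p) * u t ^ (1 - p - 1) * (δ * (a * u t + b * u t ^ p))
        = c * (a * w t + b) := by
      have : (1 - p) * u t ^ (1 - p - 1) * (δ * (a * u t + b * u t ^ p))
          = (1 - p) * δ * (a * (u t ^ (1 - p - 1) * u t) + b * (u t ^ (1 - p - 1) * u t ^ p)) := by
        ring
      rw [this, h1, h2, hc]
      simp only [hwdef]
      ring
    calc (1 - p) * u t ^ (1 - p - 1) * u' t
        ≤ (1 - p) * u t ^ (1 - p - 1) * (δ * (a * u t + b * u t ^ p)) := by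
          have := hineq t
          nlinarith [hm, this]
      _ = c * (a * w t + b) := hexp
  -- the auxiliary function g and its monotonicity
  set g : ℝ → ℝ := fun t => (a * w t + b) * Real.exp (-(a * c) * t) with hgdef
  have hg : ∀ t, HasDerivAt g
      ((a * ((1 - p) * u t ^ (1 - p - 1) * u' t)) * Real.exp (-(a * c) * t)
        + (a * w t + b) * (Real.exp (-(a * c) * t) * (-(a * c) * 1))) t := fun t =>
    (((hw t).const_mul a).add_const b).mul (((hasDerivAt_id t).const_mul (-(a * c))).exp)
  have hanti : Antitone g := by
    apply antitone_of_deriv_nonpos (fun t => (hg t).differentiableAt)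
    intro t
    rw [(hg t).deriv]
    have hex : 0 < Real.exp (-(a * c) * t) := Real.exp_pos _
    have h3 : a * ((1 - p) * u t ^ (1 - p - 1) * u' t) ≤ a * (c * (a * w t + b)) :=
      mul_le_mul_of_nonneg_left (hkey t) ha.le
    nlinarith [mul_le_mul_of_nonneg_right h3 hex.le]
  -- z₀ < 0
  set z₀ : ℝ := a * w t₀ + b with hz₀def
  have hab : 0 < -a / b := div_pos_of_neg_of_neg (by linarith) hb
  have hKpos : 0 < (-a / b) ^ (1 / (p - 1)) := Real.rpow_pos_of_pos hab _
  have hwlt : w t₀ < -b / a := by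
    have h1 : u t₀ ^ (1 - p) < ((-a / b) ^ (1 / (p - 1))) ^ (1 - p) :=
      Real.rpow_lt_rpow_of_neg hKpos hcon (by linarith)
    have h2 : ((-a / b) ^ (1 / (p - 1))) ^ (1 - p) = -b / a := by
      rw [← Real.rpow_mul hab.le]
      have hp1 : p - 1 ≠ 0 := ne_of_gt (by linarith)
      have he : 1 / (p - 1) * (1 - p) = -1 := by
        field_simp
        ring
      rw [he, Real.rpow_neg_one, inv_div, div_neg]; ring
    rw [h2] at h1
    exact h1
  have hz₀ : z₀ < 0 := by
    have h := mul_lt_mul_of_pos_left hwlt ha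
    have e : a * (-b / a) = -b := by field_simp
    rw [e] at h
    rw [hz₀def]
    linarith
  -- choose T large
  set T : ℝ := max (t₀ + 1) (t₀ - Real.log (z₀ / b) / (a * c) + 1 / (a * c)) with hT
  have hTt : t₀ ≤ T := le_trans (by linarith) (le_max_left _ _)
  have hzb : 0 < z₀ / b := div_pos_of_neg_of_neg hz₀ hb
  have hexpbound : Real.exp (a * c * (t₀ - T)) < z₀ / b := by
    have h1 : t₀ - Real.log (z₀ / b) / (a * c) + 1 / (a * c) ≤ T := le_max_right _ _
    have h2 : a * c * (t₀ - T) ≤ Real.log (z₀ / b) - 1 := by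
      have h1' : t₀ - T ≤ Real.log (z₀ / b) / (a * c) - 1 / (a * c) := by linarith
      have h3 := mul_le_mul_of_nonneg_left h1' hac.le
      have e : a * c * (Real.log (z₀ / b) / (a * c) - 1 / (a * c)) = Real.log (z₀ / b) - 1 := by
        field_simp
      linarith [e ▸ h3]
    calc Real.exp (a * c * (t₀ - T)) ≤ Real.exp (Real.log (z₀ / b) - 1) := Real.exp_le_exp.mpr h2
      _ < Real.exp (Real.log (z₀ / b)) := Real.exp_lt_exp.mpr (by linarith)
      _ = z₀ / b := Real.exp_log hzb
  -- lower bound side from antitonicity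
  have h1 : g T ≤ g t₀ := hanti hTt
  have h2 : b * Real.exp (-(a * c) * T) < g T := by
    simp only [hgdef]
    have hex : 0 < Real.exp (-(a * c) * T) := Real.exp_pos _
    have := mul_pos ha (hwpos T)
    nlinarith
  have h3 : b * Real.exp (-(a * c) * T) < z₀ * Real.exp (-(a * c) * t₀) := by
    calc b * Real.exp (-(a * c) * T) < g T := h2
      _ ≤ g t₀ := h1
      _ = z₀ * Real.exp (-(a * c) * t₀) := rfl
  have h4 : b * Real.exp (a * c * (t₀ - T)) < z₀ := by
    have e1 : Real.exp (-(a * c) * T) * Real.exp (a * c * t₀) = Real.exp (a * c * (t₀ - T)) := by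
      rw [← Real.exp_add]; congr 1; ring
    have e2 : Real.exp (-(a * c) * t₀) * Real.exp (a * c * t₀) = 1 := by
      rw [← Real.exp_add, show -(a * c) * t₀ + a * c * t₀ = 0 by ring, Real.exp_zero]
    calc b * Real.exp (a * c * (t₀ - T))
        = b * Real.exp (-(a * c) * T) * Real.exp (a * c * t₀) := by rw [← e1]; ring
      _ < z₀ * Real.exp (-(a * c) * t₀) * Real.exp (a * c * t₀) :=
          mul_lt_mul_of_pos_right h3 (Real.exp_pos _)
      _ = z₀ := by rw [mul_assoc, e2, mul_one]
  have h5 : z₀ < b * Real.exp (a * c * (t₀ - T)) := by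
    have := mul_lt_mul_of_neg_left hexpbound hb
    have hb' : b * (z₀ / b) = z₀ := by rw [mul_comm]; exact div_mul_cancel₀ z₀ hb.ne
    linarith [hb' ▸ this]
  linarith
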